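/- Let n ≥ 1, let A : Matrix (Fin n) (Fin n) ℂ, and let i, j : Fin n with i ≠ j. Assume that the support of row j of A is contained in the support of row i (for all l, A j l ≠ 0 → A i l ≠ 0) and the support of column i of A is contained in the support of column j (for all k, A k i ≠ 0 → A k j ≠ 0). Let X = Matrix.stdBasisMatrix i j (1 : ℂ). Then for all k, l : Fin n, if A k l = 0 then (X * A − A * X) k l = 0; in other words, the support of the commutator [X, A] is contained in the support of A. -/

import Mathlib

open Matrix

/-- If the support of row `j` of `A` is contained in that of
row `i`, and the support of column `i` is contained in that of column `j`,
then the support of the commutator `[E_{ij}, A]` is contained in the support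
of `A`. -/
theorem commutator_stdBasisMatrix_support (n : ℕ) (hn : 1 ≤ n)
    (A : Matrix (Fin n) (Fin n) ℂ) (i j : Fin n) (hij : i ≠ j)
    (hrow : ∀ l, A j l ≠ 0 → A i l ≠ 0)
    (hcol : ∀ k, A k i ≠ 0 → A k j ≠ 0) :
    ∀ k l, A k l = 0 →
      (Matrix.single i j (1 : ℂ) * A
        - A * Matrix.single i j (1 : ℂ)) k l = 0 := by
  intro k l hkl
  simp only [Matrix.sub_apply, Matrix.mul_apply, Matrix.single, Matrix.of_apply]
  have h1 : ∑ x, (if i = k ∧ j = x then (1:ℂ) else 0) * A x l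
      = if i = k then A j l else 0 := by
    rw [Finset.sum_eq_single j]
    · by_cases h : i = k <;> simp [h]
    · intro b _ hb; simp [hb.symm]
    · simp
  have h2 : ∑ x, A k x * (if i = x ∧ j = l then (1:ℂ) else 0)
      = if j = l then A k i else 0 := by
    rw [Finset.sum_eq_single i]
    · by_cases h : j = l <;> simp [h]
    · intro b _ hb; simp [Ne.symm hb]
    · simp
  rw [h1, h2]
  by_cases hk : i = k <;> by_cases hl : j = l <;> simp [hk, hl]
  · subst hk; subst hl
    have e1 : A j j = 0 := by by_contra h; exact hrow _ h hkl
    have e2 : A i i = 0 := by by_contra h; exact hcol _ h hkl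
    rw [e1, e2, sub_zero]
  · subst hk
    by_contra h; exact hrow _ h hkl
  · subst hl
    by_contra h; exact hcol _ h hkl
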